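/- Let G = ({1,...,n}, E) be a connected undirected graph in which every node is its own neighbor, and let A be its lazy Metropolis matrix. If x(t+1) = A x(t) and E(t) = ||x(t) − x̄ 1||₂², then for every ε ∈ (0,1) and every integer t ≥ 37 n² · ln(1/ε), one has E(t) ≤ ε · E(0). -/

import Mathlib

open Finset

/-- One step of a symmetric, stochastic, lazy matrix decreases the energy by the
Dirichlet form. -/
lemma lmc_step_ineq {n : ℕ} (A : Matrix (Fin n) (Fin n) ℝ)
    (hsym : ∀ i j, A i j = A j i) (hrow : ∀ i, ∑ j, A i j = 1)
    (hdiag : ∀ i, (1:ℝ)/2 ≤ A i i) (hoff : ∀ i j, i ≠ j → 0 ≤ A i j) (y : Fin n → ℝ) :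
    ∑ i, (A.mulVec y i)^2 ≤
      ∑ i, (y i)^2 - (1/2) * ∑ i, ∑ j, A i j * (y i - y j)^2 := by
  classical
  set B : Matrix (Fin n) (Fin n) ℝ := fun i j => 2 * A i j - if i = j then 1 else 0 with hB
  have hBnn : ∀ i j, 0 ≤ B i j := by
    intro i j
    by_cases h : i = j
    · subst h; have := hdiag i; simp [hB]; linarith
    · have := hoff i j h; simp [hB, h]; linarith
  have hBsym : ∀ i j, B i j = B j i := by
    intro i j; simp [hB, hsym i j, eq_comm]
  have hBrow : ∀ i, ∑ j, B i j = 1 := by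
    intro i
    have : ∑ j, B i j = 2 * (∑ j, A i j) - 1 := by
      simp [hB, Finset.sum_sub_distrib, Finset.mul_sum]
    rw [this, hrow]; ring
  have hAv : ∀ i, A.mulVec y i = (y i + ∑ j, B i j * y j) / 2 := by
    intro i
    have : ∑ j, B i j * y j = 2 * (∑ j, A i j * y j) - y i := by
      simp [hB, sub_mul, Finset.sum_sub_distrib, Finset.mul_sum, mul_assoc]
    rw [Matrix.mulVec, dotProduct, this]; ring
  set By : Fin n → ℝ := fun i => ∑ j, B i j * y j with hBy
  -- ‖By‖² ≤ ‖y‖²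
  have hBy_sq : ∑ i, (By i)^2 ≤ ∑ i, (y i)^2 := by
    have h1 : ∀ i, (By i)^2 ≤ ∑ j, B i j * (y j)^2 := by
      intro i
      have := sum_sq_le_sum_mul_sum_of_sq_eq_mul (Finset.univ)
        (f := fun j => B i j) (g := fun j => B i j * (y j)^2)
        (r := fun j => B i j * y j)
        (fun j _ => hBnn i j) (fun j _ => mul_nonneg (hBnn i j) (sq_nonneg _))
        (fun j _ => by ring)
      calc (By i)^2 = (∑ j, B i j * y j)^2 := rfl
        _ ≤ (∑ j, B i j) * ∑ j, B i j * (y j)^2 := this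
        _ = ∑ j, B i j * (y j)^2 := by rw [hBrow]; ring
    calc ∑ i, (By i)^2 ≤ ∑ i, ∑ j, B i j * (y j)^2 :=
          Finset.sum_le_sum fun i _ => h1 i
      _ = ∑ j, ∑ i, B i j * (y j)^2 := Finset.sum_comm
      _ = ∑ j, (y j)^2 := by
          refine Finset.sum_congr rfl fun j _ => ?_
          rw [← Finset.sum_mul,
            show (∑ i, B i j) = ∑ i, B j i from
              Finset.sum_congr rfl fun i _ => hBsym i j,
            hBrow j, one_mul]
  -- quadratic form identity
  have hquad : ∑ i, ∑ j, A i j * y i * y j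
      = ∑ i, (y i)^2 - (1/2) * ∑ i, ∑ j, A i j * (y i - y j)^2 := by
    have expand : ∀ i j, A i j * (y i - y j)^2
        = A i j * (y i)^2 + A i j * (y j)^2 - 2 * (A i j * y i * y j) := by
      intro i j; ring
    have h2 : ∑ i, ∑ j, A i j * (y i - y j)^2
        = (∑ i, ∑ j, A i j * (y i)^2) + (∑ i, ∑ j, A i j * (y j)^2)
          - 2 * ∑ i, ∑ j, A i j * y i * y j := by
      simp_rw [expand, Finset.sum_sub_distrib, Finset.sum_add_distrib, Finset.mul_sum]
    have h3 : ∑ i, ∑ j, A i j * (y i)^2 = ∑ i, (y i)^2 := by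
      refine Finset.sum_congr rfl fun i _ => ?_
      rw [← Finset.sum_mul, hrow, one_mul]
    have h4 : ∑ i, ∑ j, A i j * (y j)^2 = ∑ i, (y i)^2 := by
      rw [Finset.sum_comm]
      refine Finset.sum_congr rfl fun j _ => ?_
      rw [show (∑ i, A i j * (y j)^2) = (∑ i, A j i) * (y j)^2 by
        rw [Finset.sum_mul]; exact Finset.sum_congr rfl fun i _ => by rw [hsym i j],
        hrow, one_mul]
    rw [h2, h3, h4]; ring
  -- y' B y = 2 y'Ay - ‖y‖²
  have hyBy : ∑ i, y i * By i
      = 2 * (∑ i, ∑ j, A i j * y i * y j) - ∑ i, (y i)^2 := by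
    have h5 : ∀ i, y i * By i = (∑ j, 2 * (A i j * y i * y j))
        - ∑ j, (if i = j then y i * y j else 0) := by
      intro i
      rw [show y i * By i = ∑ j, (2 * (A i j * y i * y j)
          - (if i = j then y i * y j else 0)) from by
        simp only [hBy, Finset.mul_sum]
        refine Finset.sum_congr rfl fun j _ => ?_
        by_cases h : i = j <;> simp [hB, h] <;> ring]
      rw [Finset.sum_sub_distrib]
    have h6 : ∀ i : Fin n, (∑ j, (if i = j then y i * y j else 0)) = (y i)^2 := by
      intro i; rw [Finset.sum_ite_eq]; simp [sq]
    calc ∑ i, y i * By i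
        = ∑ i, ((∑ j, 2 * (A i j * y i * y j)) - (y i)^2) := by
          refine Finset.sum_congr rfl fun i _ => ?_
          rw [h5 i, h6 i]
      _ = 2 * (∑ i, ∑ j, A i j * y i * y j) - ∑ i, (y i)^2 := by
          rw [Finset.sum_sub_distrib, Finset.mul_sum]
          congr 1
          exact Finset.sum_congr rfl fun i _ => by rw [← Finset.mul_sum]
  have hexp : ∑ i, (A.mulVec y i)^2
      = (∑ i, (y i)^2 + 2 * (∑ i, y i * By i) + ∑ i, (By i)^2) / 4 := by
    rw [Finset.sum_congr rfl fun i (_ : i ∈ Finset.univ) =>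
      show (A.mulVec y i)^2 = ((y i)^2 + 2 * (y i * By i) + (By i)^2)/4 from by
        rw [hAv i]; ring]
    rw [← Finset.sum_div, Finset.sum_add_distrib, Finset.sum_add_distrib, ← Finset.mul_sum]
  rw [hexp, ← hquad]
  linarith [hBy_sq, hyBy]


open Finset

/-- Poincaré inequality for the Metropolis Dirichlet form, constant `6 n²`. -/
lemma lmc_poincare {n : ℕ} (hn : 0 < n) (G : SimpleGraph (Fin n))
    [DecidableRel G.Adj] (hconn : G.Connected) (d : Fin n → ℕ)
    (hd : ∀ i, d i = (Finset.univ.filter fun j => G.Adj i j).card)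
    (y : Fin n → ℝ) (hy : ∑ i, y i = 0) :
    ∑ i, (y i)^2 ≤ 6 * (n:ℝ)^2 *
      ∑ i, ∑ j, (if G.Adj i j then (y i - y j)^2 / (2 * (max (d i) (d j) : ℝ)) else 0) := by
  classical
  set F : Fin n → Fin n → ℝ := fun a b =>
    if G.Adj a b then (y a - y b)^2 / (2 * (max (d a) (d b) : ℝ)) else 0 with hF
  set S : ℝ := ∑ i, ∑ j, F i j with hS
  have hFnn : ∀ a b, 0 ≤ F a b := by
    intro a b
    simp only [hF]
    split
    · positivity
    · exact le_rfl
  have hSnn : 0 ≤ S :=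
    Finset.sum_nonneg fun i _ => Finset.sum_nonneg fun j _ => hFnn i j
  -- dist of adjacent vertices is ≤ 1
  have hadj1 : ∀ u w : Fin n, G.Adj u w → G.dist u w ≤ 1 := by
    intro u w h
    have := SimpleGraph.dist_le (SimpleGraph.Walk.cons h SimpleGraph.Walk.nil)
    simpa using this
  -- key pairwise bound
  have hpair : ∀ i k : Fin n, (y i - y k)^2 ≤ 12 * n * S := by
    intro i k
    obtain ⟨p, hp⟩ := hconn.exists_walk_length_eq_dist i k
    set L := p.length with hL
    set v : ℕ → Fin n := p.getVert with hv
    have hv0 : v 0 = i := p.getVert_zero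
    have hvL : v L = k := p.getVert_length
    have hadj : ∀ t, t < L → G.Adj (v t) (v (t + 1)) := fun t ht =>
      p.adj_getVert_succ ht
    -- upper bound on dist along the walk
    have hub : ∀ s m : ℕ, s + m ≤ L → G.dist (v s) (v (s + m)) ≤ m := by
      intro s m
      induction m with
      | zero => intro _; simp [SimpleGraph.dist_self]
      | succ m ih =>
        intro hsm
        have h1 : s + m ≤ L := by omega
        have h2 := hconn.dist_triangle (u := v s) (v := v (s + m)) (w := v (s + m + 1))
        have h3 : G.dist (v (s + m)) (v (s + m + 1)) ≤ 1 :=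
          hadj1 _ _ (hadj (s + m) (by omega))
        calc G.dist (v s) (v (s + m + 1)) ≤ _ := h2
          _ ≤ m + 1 := by have := ih h1; omega
    -- lower bound: the walk is a shortest path
    have hlb : ∀ s t : ℕ, s ≤ t → t ≤ L → (t - s : ℕ) ≤ G.dist (v s) (v t) := by
      intro s t hst htL
      have h1 : G.dist i (v s) ≤ s := by
        have := hub 0 s (by omega); simpa [hv0] using this
      have h2 : G.dist (v t) k ≤ L - t := by
        have := hub t (L - t) (by omega)
        rw [show t + (L - t) = L by omega, hvL] at this
        exact this
      have h3 : G.dist i k ≤ G.dist i (v s) + G.dist (v s) (v t) + G.dist (v t) k := by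
        have t1 := hconn.dist_triangle (u := i) (v := v s) (w := v t)
        have t2 := hconn.dist_triangle (u := i) (v := v t) (w := k)
        omega
      have h4 : G.dist i k = L := hp.symm
      omega
    have hvinj : ∀ s t : ℕ, s ≤ L → t ≤ L → v s = v t → s = t := by
      intro s t hsL htL hvst
      rcases le_total s t with h | h
      · have := hlb s t h htL
        rw [hvst, SimpleGraph.dist_self] at this; omega
      · have := hlb t s h hsL
        rw [hvst, SimpleGraph.dist_self] at this; omega
    -- closed neighborhoods
    set N : Fin n → Finset (Fin n) := fun u => insert u (Finset.univ.filter (G.Adj u)) with hN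
    have hNcard : ∀ u, (N u).card = d u + 1 := by
      intro u
      rw [hN]
      rw [Finset.card_insert_of_notMem (by simp [G.irrefl]), hd u]
    have hNmem_dist : ∀ u w, w ∈ N u → G.dist u w ≤ 1 := by
      intro u w hw
      simp only [hN, Finset.mem_insert, Finset.mem_filter] at hw
      rcases hw with h | h
      · subst h; simp [SimpleGraph.dist_self]
      · exact hadj1 _ _ h.2
    have hdisj : ∀ s t : ℕ, s ≤ L → t ≤ L → s + 3 ≤ t → Disjoint (N (v s)) (N (v t)) := by
      intro s t hsL htL hst
      rw [Finset.disjoint_left]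
      intro w hws hwt
      have h1 := hNmem_dist _ _ hws
      have h2 := hNmem_dist _ _ hwt
      have h3 : G.dist (v s) (v t) ≤ 2 := by
        have := hconn.dist_triangle (u := v s) (v := w) (w := v t)
        have h4 : G.dist w (v t) ≤ 1 := by rwa [SimpleGraph.dist_comm] at h2
        omega
      have := hlb s t (by omega) htL
      omega
    -- degree sum along the walk
    have hdegsum : (∑ t ∈ Finset.range (L + 1), (d (v t) + 1)) ≤ 3 * n := by
      have hmaps : ∀ t ∈ Finset.range (L + 1), t % 3 ∈ Finset.range 3 := by
        intro t _; simp only [Finset.mem_range]; omega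
      rw [← Finset.sum_fiberwise_of_maps_to hmaps]
      have hfiber : ∀ r ∈ Finset.range 3,
          (∑ t ∈ (Finset.range (L + 1)).filter (fun t => t % 3 = r), (d (v t) + 1)) ≤ n := by
        intro r _
        set s := (Finset.range (L + 1)).filter (fun t => t % 3 = r) with hs
        have hdj : ∀ a ∈ s, ∀ b ∈ s, a ≠ b → Disjoint (N (v a)) (N (v b)) := by
          intro a ha b hb hab
          simp only [hs, Finset.mem_filter, Finset.mem_range] at ha hb
          rcases le_total a b with h | h
          · exact hdisj a b (by omega) (by omega) (by omega)
          · exact (hdisj b a (by omega) (by omega) (by omega)).symm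
        calc ∑ t ∈ s, (d (v t) + 1) = ∑ t ∈ s, (N (v t)).card :=
              Finset.sum_congr rfl fun t _ => (hNcard (v t)).symm
          _ = (s.biUnion fun t => N (v t)).card := (Finset.card_biUnion hdj).symm
          _ ≤ n := by simpa using Finset.card_le_univ (s.biUnion fun t => N (v t))
      calc ∑ r ∈ Finset.range 3, ∑ t ∈ (Finset.range (L+1)).filter (fun t => t % 3 = r), (d (v t) + 1)
          ≤ ∑ _r ∈ Finset.range 3, n := Finset.sum_le_sum hfiber
        _ = 3 * n := by simp [mul_comm]
    have hdsum : (∑ t ∈ Finset.range (L + 1), d (v t)) ≤ 3 * n :=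
      le_trans (Finset.sum_le_sum fun t _ => Nat.le_succ (d (v t))) hdegsum
    -- sum of max-degrees along the walk
    have hmsum : (∑ t ∈ Finset.range L, (max (d (v t)) (d (v (t+1))) : ℕ)) ≤ 6 * n := by
      have h1 : ∀ t, (max (d (v t)) (d (v (t+1))) : ℕ) ≤ d (v t) + d (v (t+1)) := fun t => by omega
      have h2 : (∑ t ∈ Finset.range L, d (v t)) ≤ 3 * n := by
        refine le_trans (Finset.sum_le_sum_of_subset ?_) hdsum
        exact Finset.range_subset_range.mpr (by omega)
      have h3 : (∑ t ∈ Finset.range L, d (v (t+1))) ≤ 3 * n := by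
        have hh := Finset.sum_range_succ' (fun t => d (v t)) L
        beta_reduce at hh
        omega
      calc (∑ t ∈ Finset.range L, (max (d (v t)) (d (v (t+1))) : ℕ))
          ≤ ∑ t ∈ Finset.range L, (d (v t) + d (v (t+1))) := Finset.sum_le_sum fun t _ => h1 t
        _ = (∑ t ∈ Finset.range L, d (v t)) + ∑ t ∈ Finset.range L, d (v (t+1)) :=
            Finset.sum_add_distrib
        _ ≤ 6 * n := by omega
    have hm1 : ∀ t, t < L → (1 : ℕ) ≤ max (d (v t)) (d (v (t+1))) := by
      intro t ht
      have h := hadj t ht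
      have : v (t+1) ∈ Finset.univ.filter (G.Adj (v t)) := by simp [h]
      have : 0 < d (v t) := by rw [hd]; exact Finset.card_pos.mpr ⟨_, this⟩
      omega
    -- Cauchy–Schwarz along the walk
    set m : ℕ → ℝ := fun t => (max (d (v t)) (d (v (t+1))) : ℕ) with hm
    have hmpos : ∀ t, t < L → (0 : ℝ) < m t := by
      intro t ht
      have := hm1 t ht
      simp only [hm]
      exact_mod_cast Nat.lt_of_lt_of_le Nat.zero_lt_one this
    have hCS := sum_sq_le_sum_mul_sum_of_sq_eq_mul (Finset.range L)
      (r := fun t => y (v (t+1)) - y (v t))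
      (f := fun t => m t)
      (g := fun t => (y (v (t+1)) - y (v t))^2 / m t)
      (fun t ht => le_of_lt (hmpos t (Finset.mem_range.mp ht)))
      (fun t ht => div_nonneg (sq_nonneg _) (le_of_lt (hmpos t (Finset.mem_range.mp ht))))
      (fun t ht => by
        field_simp [ne_of_gt (hmpos t (Finset.mem_range.mp ht))])
    have htel : (∑ t ∈ Finset.range L, (y (v (t+1)) - y (v t))) = y k - y i := by
      rw [Finset.sum_range_sub (fun t => y (v t)) L, hv0, hvL]
    rw [htel] at hCS
    -- bound the two factors
    have hfac1 : (∑ t ∈ Finset.range L, m t) ≤ 6 * (n : ℝ) := by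
      have : (∑ t ∈ Finset.range L, m t) = ((∑ t ∈ Finset.range L, (max (d (v t)) (d (v (t+1))) : ℕ) : ℕ) : ℝ) := by
        push_cast [hm]; rfl
      rw [this]
      exact_mod_cast hmsum
    have hfac2 : (∑ t ∈ Finset.range L, (y (v (t+1)) - y (v t))^2 / m t) ≤ 2 * S := by
      have hterm : ∀ t, t < L →
          (y (v (t+1)) - y (v t))^2 / m t = 2 * F (v t) (v (t+1)) := by
        intro t ht
        have h := hadj t ht
        have hmne : m t ≠ 0 := ne_of_gt (hmpos t ht)
        simp only [hF, h, if_pos]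
        rw [show (y (v t) - y (v (t+1)))^2 = (y (v (t+1)) - y (v t))^2 by ring]
        rw [hm] at hmne ⊢
        push_cast
        field_simp
      rw [Finset.sum_congr rfl fun t ht => hterm t (Finset.mem_range.mp ht), ← Finset.mul_sum]
      have hinj : ∀ a ∈ Finset.range L, ∀ b ∈ Finset.range L,
          (fun t => ((v t, v (t+1)) : Fin n × Fin n)) a = (fun t => (v t, v (t+1))) b → a = b := by
        intro a ha b hb hab
        simp only [Prod.mk.injEq] at hab
        exact hvinj a b (by simp at ha; omega) (by simp at hb; omega) hab.1
      have himg : (∑ t ∈ Finset.range L, F (v t) (v (t+1)))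
          = ∑ q ∈ (Finset.range L).image (fun t => ((v t, v (t+1)) : Fin n × Fin n)),
              F q.1 q.2 :=
        (Finset.sum_image (f := fun q : Fin n × Fin n => F q.1 q.2) hinj).symm
      have hSprod : S = ∑ q ∈ (Finset.univ : Finset (Fin n × Fin n)), F q.1 q.2 := by
        rw [hS, ← Finset.univ_product_univ, Finset.sum_product]
      have hle : (∑ t ∈ Finset.range L, F (v t) (v (t+1))) ≤ S := by
        rw [himg, hSprod]
        exact Finset.sum_le_sum_of_subset_of_nonneg (Finset.subset_univ _)
          (fun q _ _ => hFnn q.1 q.2)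
      linarith
    have hg_nn : 0 ≤ ∑ t ∈ Finset.range L, (y (v (t+1)) - y (v t))^2 / m t :=
      Finset.sum_nonneg fun t ht =>
        div_nonneg (sq_nonneg _) (le_of_lt (hmpos t (Finset.mem_range.mp ht)))
    calc (y i - y k)^2 = (y k - y i)^2 := by ring
      _ ≤ (∑ t ∈ Finset.range L, m t)
            * ∑ t ∈ Finset.range L, (y (v (t+1)) - y (v t))^2 / m t := hCS
      _ ≤ (6 * (n:ℝ)) * (2 * S) := by
          apply mul_le_mul hfac1 hfac2 hg_nn
          positivity
      _ = 12 * n * S := by ring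
  -- mean-zero identity and conclusion
  have hsq : ∑ i, ∑ k, (y i - y k)^2 = 2 * (n:ℝ) * ∑ i, (y i)^2 := by
    have expand : ∀ i k : Fin n, (y i - y k)^2
        = (y i)^2 - 2 * (y i * y k) + (y k)^2 := fun i k => by ring
    have h1 : ∑ i : Fin n, ∑ k : Fin n, (y i)^2 = (n:ℝ) * ∑ i, (y i)^2 := by
      simp [Finset.sum_const, Finset.card_univ, Finset.mul_sum]
    have h2 : ∑ i : Fin n, ∑ k : Fin n, (y k)^2 = (n:ℝ) * ∑ i, (y i)^2 := by
      rw [Finset.sum_comm]; exact h1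
    have h3 : ∑ i : Fin n, ∑ k : Fin n, y i * y k = 0 := by
      rw [← Finset.sum_mul_sum, hy]; ring
    calc ∑ i, ∑ k, (y i - y k)^2
        = ∑ i : Fin n, ∑ k : Fin n, ((y i)^2 - 2 * (y i * y k) + (y k)^2) := by
          exact Finset.sum_congr rfl fun i _ =>
            Finset.sum_congr rfl fun k _ => expand i k
      _ = (∑ i : Fin n, ∑ k : Fin n, (y i)^2)
            - 2 * (∑ i : Fin n, ∑ k : Fin n, y i * y k)
            + ∑ i : Fin n, ∑ k : Fin n, (y k)^2 := by
          simp [Finset.sum_add_distrib, Finset.sum_sub_distrib, Finset.mul_sum]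
      _ = 2 * (n:ℝ) * ∑ i, (y i)^2 := by rw [h1, h2, h3]; ring
  have hsum_le : ∑ i : Fin n, ∑ k : Fin n, (y i - y k)^2
      ≤ (n:ℝ) * ((n:ℝ) * (12 * n * S)) := by
    calc ∑ i : Fin n, ∑ k : Fin n, (y i - y k)^2
        ≤ ∑ _i : Fin n, ∑ _k : Fin n, 12 * (n:ℝ) * S :=
          Finset.sum_le_sum fun i _ => Finset.sum_le_sum fun k _ => hpair i k
      _ = (n:ℝ) * ((n:ℝ) * (12 * n * S)) := by
          simp only [Finset.sum_const, Finset.card_univ, Fintype.card_fin, nsmul_eq_mul]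
  have hnpos : (0:ℝ) < n := by exact_mod_cast hn
  have h2n : (0:ℝ) < 2 * n := by linarith
  rw [← mul_le_mul_iff_right₀ h2n]
  calc 2 * (n:ℝ) * ∑ i, (y i)^2 = ∑ i, ∑ k, (y i - y k)^2 := hsq.symm
    _ ≤ (n:ℝ) * ((n:ℝ) * (12 * n * S)) := hsum_le
    _ = 2 * (n:ℝ) * (6 * (n:ℝ)^2 * S) := by ring


open Classical in
/-- With the lazy Metropolis weights, for every `ε ∈ (0,1)`, after
`t ≥ 37 n² ln(1/ε)` steps of the consensus iteration the squared error
`E(t) = ‖x(t) - x̄ 1‖₂²` has shrunk by a factor of `ε`. -/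
theorem lazy_metropolis_convergence_time
    (n : ℕ) (hn : 0 < n)
    (E : Fin n → Fin n → Prop)
    (hE_symm : ∀ i j, E i j → E j i)
    (hE_refl : ∀ i, E i i)
    (hE_conn : ∀ i j, Relation.ReflTransGen E i j)
    (d : Fin n → ℕ)
    (hd : ∀ i, d i = (Finset.univ.filter fun j => j ≠ i ∧ E i j).card)
    (A : Matrix (Fin n) (Fin n) ℝ)
    (hA : ∀ i j, A i j =
      if j = i then
        1 - ∑ l ∈ Finset.univ.filter (fun l => l ≠ i ∧ E i l),
              1 / (2 * (max (d i) (d l) : ℝ))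
      else if E i j then 1 / (2 * (max (d i) (d j) : ℝ)) else 0)
    (x : ℕ → Fin n → ℝ)
    (hx : ∀ t, x (t + 1) = A.mulVec (x t))
    (xbar : ℝ) (hxbar : xbar = (∑ j, x 0 j) / n)
    (Esq : ℕ → ℝ) (hEsq : ∀ t, Esq t = ∑ i, (x t i - xbar) ^ 2) :
    ∀ ε : ℝ, 0 < ε → ε < 1 →
      ∀ t : ℕ, 37 * (n : ℝ) ^ 2 * Real.log (1 / ε) ≤ (t : ℝ) →
        Esq t ≤ ε * Esq 0 := by
  classical
  have hnR : (0:ℝ) < n := by exact_mod_cast hn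
  -- the underlying simple graph
  set G : SimpleGraph (Fin n) :=
    { Adj := fun i j => i ≠ j ∧ E i j
      symm := ⟨fun i j h => ⟨h.1.symm, hE_symm _ _ h.2⟩⟩
      loopless := ⟨fun i h => h.1 rfl⟩ } with hG
  have hGadj : ∀ i j, G.Adj i j ↔ (i ≠ j ∧ E i j) := fun i j => Iff.rfl
  letI : DecidableRel G.Adj := Classical.decRel _
  have hGpre : G.Preconnected := by
    intro i j
    induction hE_conn i j with
    | refl => exact SimpleGraph.Reachable.refl _
    | @tail b c hab hbc ih =>
      by_cases h : b = c
      · exact h ▸ ih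
      · exact ih.trans (SimpleGraph.Adj.reachable ((hGadj b c).mpr ⟨h, hbc⟩))
  haveI : Nonempty (Fin n) := ⟨⟨0, hn⟩⟩
  have hGconn : G.Connected := ⟨hGpre⟩
  have hdeg : ∀ i, d i = (Finset.univ.filter fun j => G.Adj i j).card := by
    intro i
    rw [hd i]
    apply congrArg Finset.card
    ext j
    simp only [Finset.mem_filter, Finset.mem_univ, true_and, hGadj]
    rw [ne_comm]
  -- basic matrix facts
  have hdpos : ∀ i j : Fin n, i ≠ j → E i j → 0 < d i := by
    intro i j hij hEij
    rw [hd i]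
    refine Finset.card_pos.mpr ⟨j, ?_⟩
    simp only [Finset.mem_filter, Finset.mem_univ, true_and]
    exact ⟨Ne.symm hij, hEij⟩
  have hAoff : ∀ i j, i ≠ j →
      A i j = if E i j then 1 / (2 * (max (d i) (d j) : ℝ)) else 0 := by
    intro i j hij
    rw [hA i j, if_neg (Ne.symm hij)]
  have hAsym : ∀ i j, A i j = A j i := by
    intro i j
    by_cases hij : i = j
    · rw [hij]
    · rw [hAoff i j hij, hAoff j i (Ne.symm hij)]
      by_cases hEij : E i j
      · rw [if_pos hEij, if_pos (hE_symm _ _ hEij), max_comm]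
      · rw [if_neg hEij, if_neg (fun h => hEij (hE_symm _ _ h))]
  have hArow : ∀ i, ∑ j, A i j = 1 := by
    intro i
    rw [← Finset.add_sum_erase Finset.univ (fun j => A i j) (Finset.mem_univ i)]
    have h1 : ∑ j ∈ Finset.univ.erase i, A i j
        = ∑ j ∈ Finset.univ.erase i,
            (if E i j then 1 / (2 * (max (d i) (d j) : ℝ)) else 0) := by
      refine Finset.sum_congr rfl fun j hj => ?_
      exact hAoff i j (Ne.symm (Finset.mem_erase.mp hj).1)
    have h2 : ∑ j ∈ Finset.univ.erase i,
          (if E i j then 1 / (2 * (max (d i) (d j) : ℝ)) else 0)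
        = ∑ j ∈ Finset.univ.filter (fun l => l ≠ i ∧ E i l),
            1 / (2 * (max (d i) (d j) : ℝ)) := by
      rw [← Finset.sum_filter]
      congr 1
      ext j
      simp [Finset.mem_erase, and_comm]
    rw [h1, h2, hA i i, if_pos rfl]
    ring
  have hAdiag : ∀ i, (1:ℝ)/2 ≤ A i i := by
    intro i
    rw [hA i i, if_pos rfl]
    set Fi := Finset.univ.filter (fun l => l ≠ i ∧ E i l) with hFi
    have hcard : Fi.card = d i := (hd i).symm
    by_cases hFe : Fi = ∅
    · rw [hFe]
      simp only [Finset.sum_empty, sub_zero]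
      norm_num
    · have hdi : 0 < d i := by
        rw [← hcard]
        exact Finset.card_pos.mpr (Finset.nonempty_of_ne_empty hFe)
      have hdiR : (0:ℝ) < d i := by exact_mod_cast hdi
      have hterm : ∀ l ∈ Fi, 1 / (2 * (max (d i) (d l) : ℝ)) ≤ 1 / (2 * (d i : ℝ)) := by
        intro l _
        apply one_div_le_one_div_of_le (by linarith)
        have : (d i : ℝ) ≤ max (d i : ℝ) (d l : ℝ) := le_max_left _ _
        linarith
      have hsum := Finset.sum_le_card_nsmul Fi _ _ hterm
      rw [hcard] at hsum
      have : (d i) • (1 / (2 * (d i : ℝ))) = 1/2 := by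
        rw [nsmul_eq_mul]
        field_simp
      rw [this] at hsum
      linarith
  have hAoffnn : ∀ i j, i ≠ j → 0 ≤ A i j := by
    intro i j hij
    rw [hAoff i j hij]
    split
    · positivity
    · exact le_rfl
  -- centered variables
  set y : ℕ → Fin n → ℝ := fun t i => x t i - xbar with hy
  have hyrec : ∀ t, ∀ i, y (t+1) i = A.mulVec (y t) i := by
    intro t i
    have h1 : y (t+1) i = (∑ j, A i j * x t j) - xbar := by
      simp only [hy, hx t, Matrix.mulVec, dotProduct]
    have h2 : A.mulVec (y t) i = (∑ j, A i j * x t j) - (∑ j, A i j) * xbar := by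
      simp only [Matrix.mulVec, dotProduct, hy, mul_sub]
      rw [Finset.sum_sub_distrib, Finset.sum_mul]
    rw [h1, h2, hArow i, one_mul]
  have hEsq_y : ∀ t, Esq t = ∑ i, (y t i)^2 := fun t => hEsq t
  have hEsq_nn : ∀ t, 0 ≤ Esq t := fun t => by
    rw [hEsq_y t]; exact Finset.sum_nonneg fun i _ => sq_nonneg _
  have hysum0 : ∀ t, ∑ i, y t i = 0 := by
    intro t
    induction t with
    | zero =>
      simp only [hy, Finset.sum_sub_distrib, Finset.sum_const, Finset.card_univ,
        Fintype.card_fin, nsmul_eq_mul, hxbar]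
      field_simp
      ring
    | succ t ih =>
      rw [Finset.sum_congr rfl fun i (_ : i ∈ Finset.univ) => hyrec t i]
      show ∑ i, A.mulVec (y t) i = 0
      simp only [Matrix.mulVec, dotProduct]
      rw [Finset.sum_comm]
      calc ∑ j, ∑ i, A i j * y t j = ∑ j, (∑ i, A j i) * y t j := by
            refine Finset.sum_congr rfl fun j _ => ?_
            rw [Finset.sum_mul]
            exact Finset.sum_congr rfl fun i _ => by rw [hAsym i j]
        _ = ∑ j, y t j := by
            refine Finset.sum_congr rfl fun j _ => ?_
            rw [hArow j, one_mul]
        _ = 0 := ih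
  -- Dirichlet form matches graph form
  have hQS : ∀ t, ∑ i, ∑ j, A i j * (y t i - y t j)^2
      = ∑ i, ∑ j, (if G.Adj i j then (y t i - y t j)^2 / (2 * (max (d i) (d j) : ℝ)) else 0) := by
    intro t
    refine Finset.sum_congr rfl fun i _ => Finset.sum_congr rfl fun j _ => ?_
    by_cases hij : i = j
    · subst hij
      rw [if_neg (G.irrefl)]
      ring
    · rw [hAoff i j hij]
      by_cases hEij : E i j
      · rw [if_pos hEij, if_pos ((hGadj i j).mpr ⟨hij, hEij⟩)]
        ring
      · rw [if_neg hEij, if_neg (fun h => hEij ((hGadj i j).mp h).2)]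
        ring
  -- one-step contraction
  have hstep : ∀ t, Esq (t+1) ≤ (1 - 1/(37*(n:ℝ)^2)) * Esq t := by
    intro t
    have hs := lmc_step_ineq A hAsym hArow hAdiag hAoffnn (y t)
    have hlhs : ∑ i, (A.mulVec (y t) i)^2 = Esq (t+1) := by
      rw [hEsq_y (t+1)]
      exact Finset.sum_congr rfl fun i _ => by rw [hyrec t i]
    set S : ℝ := ∑ i, ∑ j,
      (if G.Adj i j then (y t i - y t j)^2 / (2 * (max (d i) (d j) : ℝ)) else 0) with hSdef
    have hSnn : 0 ≤ S := by
      refine Finset.sum_nonneg fun i _ => Finset.sum_nonneg fun j _ => ?_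
      split
      · positivity
      · exact le_rfl
    have hpoin := lmc_poincare hn G hGconn d hdeg (y t) (hysum0 t)
    rw [← hEsq_y t, ← hSdef] at hpoin
    rw [hlhs, hQS t, ← hSdef, ← hEsq_y t] at hs
    have hkey : (1/(37*(n:ℝ)^2)) * Esq t ≤ (1/2) * S := by
      have h1 : (1/(37*(n:ℝ)^2)) * Esq t ≤ (1/(37*(n:ℝ)^2)) * (6*(n:ℝ)^2*S) := by
        apply mul_le_mul_of_nonneg_left hpoin
        positivity
      have h2 : (1/(37*(n:ℝ)^2)) * (6*(n:ℝ)^2*S) = (6/37) * S := by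
        field_simp
      rw [h2] at h1
      linarith
    linarith
  -- geometric decay
  set r : ℝ := 1 - 1/(37*(n:ℝ)^2) with hr
  have hg1 : 1/(37*(n:ℝ)^2) ≤ 1 := by
    rw [div_le_one (by positivity)]
    have : (1:ℝ) ≤ (n:ℝ) := by exact_mod_cast hn
    nlinarith
  have hr0 : 0 ≤ r := by rw [hr]; linarith
  have hgeo : ∀ t, Esq t ≤ r^t * Esq 0 := by
    intro t
    induction t with
    | zero => simp
    | succ t ih =>
      calc Esq (t+1) ≤ r * Esq t := hstep t
        _ ≤ r * (r^t * Esq 0) := mul_le_mul_of_nonneg_left ih hr0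
        _ = r^(t+1) * Esq 0 := by ring
  -- conclusion
  intro ε hε0 hε1 t ht
  set g : ℝ := 1/(37*(n:ℝ)^2) with hgdef
  have hgpos : 0 < g := by positivity
  have hrexp : r ≤ Real.exp (-g) := by
    have := Real.add_one_le_exp (-g)
    rw [hr]; linarith
  have hpow : r^t ≤ Real.exp (-(g * t)) := by
    calc r^t ≤ (Real.exp (-g))^t := pow_le_pow_left₀ hr0 hrexp t
      _ = Real.exp (-(g*t)) := by
          rw [← Real.exp_nat_mul]
          congr 1
          ring
  have hεlog : Real.exp (-(g*t)) ≤ ε := by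
    have hlog : Real.log (1/ε) ≤ g * t := by
      have h1 : g * (37 * (n:ℝ)^2 * Real.log (1/ε)) ≤ g * t :=
        mul_le_mul_of_nonneg_left ht (le_of_lt hgpos)
      have h2 : g * (37 * (n:ℝ)^2 * Real.log (1/ε)) = Real.log (1/ε) := by
        rw [hgdef]
        field_simp
      linarith
    have h3 : -(g*t) ≤ Real.log ε := by
      rw [one_div, Real.log_inv] at hlog
      linarith
    calc Real.exp (-(g*t)) ≤ Real.exp (Real.log ε) := Real.exp_le_exp.mpr h3
      _ = ε := Real.exp_log hε0
  calc Esq t ≤ r^t * Esq 0 := hgeo t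
    _ ≤ ε * Esq 0 := by
        apply mul_le_mul_of_nonneg_right _ (hEsq_nn 0)
        exact le_trans hpow hεlog
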